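/- Let Γ be a numerical semigroup with elements listed in increasing order ρ₁ = 0 < ρ₂ < ρ₃ < ⋯, and set δᵢ = ρ_{i+1} − ρᵢ for i ≥ 1. Then Γ is inductive if and only if δ_{i+1} divides δᵢ for every i ≥ 1. -/

import Mathlib

/-- A numerical semigroup: an additive submonoid of ℕ with finite complement. -/
def IsNumericalSemigroup (Γ : Set ℕ) : Prop :=
  0 ∈ Γ ∧ (∀ x ∈ Γ, ∀ y ∈ Γ, x + y ∈ Γ) ∧ Γᶜ.Finite

/-- The inductive numerical semigroups Γ₀ = ℕ, Γᵢ = aᵢ·Γ_{i-1} ∪ (aᵢbᵢ + ℕ). -/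
def IndSG (a b : ℕ → ℕ) : ℕ → Set ℕ
  | 0 => Set.univ
  | i + 1 => (fun x => a (i + 1) * x) '' IndSG a b i ∪ {x | a (i + 1) * b (i + 1) ≤ x}

/-- A numerical semigroup is inductive if it is Γₙ for some admissible data
(`n = 0` is allowed, so ℕ itself is inductive). -/
def IsInductive (Γ : Set ℕ) : Prop :=
  ∃ n, ∃ a b : ℕ → ℕ, (∀ i, 1 ≤ i → i ≤ n → 2 ≤ a i) ∧ (1 ≤ n → 1 ≤ b 1) ∧
    (∀ i, 1 ≤ i → i + 1 ≤ n → a i * b i ≤ b (i + 1)) ∧ Γ = IndSG a b n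

/-- Two strictly monotone sequences of naturals with the same range are equal. -/
lemma aux_sm_le {f g : ℕ → ℕ} (hf : StrictMono f) (hg : StrictMono g)
    (h : Set.range f ⊆ Set.range g)
    (n : ℕ) (ih : ∀ k < n, f k = g k) : g n ≤ f n := by
  obtain ⟨m, hm⟩ := h (Set.mem_range_self n)
  rcases lt_or_ge m n with hlt | hge
  · have h1 := ih m hlt
    have h2 : f m < f n := hf hlt
    omega
  · have := hg.monotone hge
    omega

lemma strictMono_range_eq {f g : ℕ → ℕ} (hf : StrictMono f) (hg : StrictMono g)
    (h : Set.range f = Set.range g) : ∀ n, f n = g n := by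
  intro n
  induction n using Nat.strong_induction_on with
  | _ n ih =>
    have h1 := aux_sm_le hf hg h.le n ih
    have h2 := aux_sm_le hg hf h.ge n (fun k hk => (ih k hk).symm)
    omega

lemma dvd_chain {δ : ℕ → ℕ} (h : ∀ i, δ (i + 1) ∣ δ i) : ∀ i d, δ (i + d) ∣ δ i := by
  intro i d
  induction d with
  | zero => simp
  | succ d ihd => exact dvd_trans (by simpa [← Nat.add_assoc] using h (i + d)) ihd

lemma IndSG_congr (a b a' b' : ℕ → ℕ) (n : ℕ) (ha : ∀ i, 1 ≤ i → i ≤ n → a i = a' i)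
    (hb : ∀ i, 1 ≤ i → i ≤ n → b i = b' i) : IndSG a b n = IndSG a' b' n := by
  induction n with
  | zero => rfl
  | succ n ihn =>
    have h1 : IndSG a b n = IndSG a' b' n :=
      ihn (fun i h1 h2 => ha i h1 (by omega)) (fun i h1 h2 => hb i h1 (by omega))
    show _ ∪ _ = _ ∪ _
    rw [h1, ha (n + 1) (by omega) le_rfl, hb (n + 1) (by omega) le_rfl]

/-- Forward core: every inductive semigroup has an enumeration with dividing gaps. -/
lemma lemA : ∀ (n : ℕ) (a b : ℕ → ℕ), (∀ i, 1 ≤ i → i ≤ n → 2 ≤ a i) → (1 ≤ n → 1 ≤ b 1) →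
    (∀ i, 1 ≤ i → i + 1 ≤ n → a i * b i ≤ b (i + 1)) →
    ∃ ρ : ℕ → ℕ, StrictMono ρ ∧ Set.range ρ = IndSG a b n ∧
      (∀ i, (ρ (i + 2) - ρ (i + 1)) ∣ (ρ (i + 1) - ρ i)) ∧
      (∀ x, (if n = 0 then 0 else a n * b n) ≤ x → x ∈ Set.range ρ) := by
  intro n
  induction n with
  | zero =>
    intro a b _ _ _
    refine ⟨id, strictMono_id, by simp [IndSG, Set.range_id], fun i => by simp, fun x _ => ⟨x, rfl⟩⟩
  | succ n ihn =>
    intro a b ha hb1 hbc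
    obtain ⟨ρ, hmono, hrange, hdvd, hcond⟩ :=
      ihn a b (fun i h1 h2 => ha i h1 (by omega)) (fun h => hb1 (by omega))
        (fun i h1 h2 => hbc i h1 (by omega))
    have hA : 2 ≤ a (n + 1) := ha (n + 1) (by omega) le_rfl
    have hBmem : b (n + 1) ∈ Set.range ρ := by
      apply hcond
      rcases Nat.eq_zero_or_pos n with rfl | hn
      · simp
      · rw [if_neg (by omega)]
        exact hbc n hn le_rfl
    obtain ⟨j, hj⟩ := hBmem
    set ρ' : ℕ → ℕ := fun i => if i ≤ j then a (n + 1) * ρ i else a (n + 1) * b (n + 1) + (i - j) with hρ'def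
    have hρle : ∀ i, i ≤ j → ρ i ≤ b (n + 1) := fun i hi => hj ▸ hmono.monotone hi
    have htail : ∀ k, ρ' (j + k) = a (n + 1) * b (n + 1) + k := by
      intro k
      cases k with
      | zero => simp [hρ'def, hj]
      | succ k => simp only [hρ'def]; rw [if_neg (by omega)]; omega
    have hmono' : StrictMono ρ' := by
      intro i i' hii
      by_cases hi' : i' ≤ j
      · have hi : i ≤ j := by omega
        simp only [hρ'def, if_pos hi, if_pos hi']
        exact (Nat.mul_lt_mul_left (by omega)).mpr (hmono hii)
      · by_cases hi : i ≤ j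
        · simp only [hρ'def, if_pos hi, if_neg hi']
          have h1 : ρ i ≤ b (n + 1) := hρle i hi
          have : a (n + 1) * ρ i ≤ a (n + 1) * b (n + 1) := Nat.mul_le_mul_left (a (n + 1)) h1
          omega
        · simp only [hρ'def, if_neg hi, if_neg hi']
          omega
    have hgap : ∀ i, ρ' (i + 1) - ρ' i = if i < j then a (n + 1) * (ρ (i + 1) - ρ i) else 1 := by
      intro i
      rcases lt_or_ge i j with hij | hij
      · rw [if_pos hij]
        simp only [hρ'def, if_pos (show i ≤ j by omega), if_pos (show i + 1 ≤ j by omega)]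
        exact (Nat.mul_sub (a (n + 1)) (ρ (i + 1)) (ρ i)).symm
      · rw [if_neg (by omega)]
        obtain ⟨k, rfl⟩ := Nat.le.dest hij
        have h1 := htail k
        have h2 := htail (k + 1)
        rw [show j + k + 1 = j + (k + 1) by omega] at *
        omega
    refine ⟨ρ', hmono', ?_, ?_, ?_⟩
    · show Set.range ρ' = _ ∪ _
      rw [hrange.symm]
      ext x
      constructor
      · rintro ⟨m, rfl⟩
        by_cases hm : m ≤ j
        · exact Or.inl ⟨ρ m, ⟨m, rfl⟩, by simp [hρ'def, if_pos hm]⟩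
        · right
          simp only [hρ'def, if_neg hm]
          simp only [Set.mem_setOf_eq]
          omega
      · rintro (⟨y, ⟨m, rfl⟩, rfl⟩ | hx)
        · by_cases hm : m ≤ j
          · exact ⟨m, by simp [hρ'def, if_pos hm]⟩
          · have h1 : b (n + 1) < ρ m := hj ▸ hmono (by omega)
            have h2 : a (n + 1) * b (n + 1) ≤ a (n + 1) * ρ m := Nat.mul_le_mul_left (a (n + 1)) (by omega)
            refine ⟨j + (a (n + 1) * ρ m - a (n + 1) * b (n + 1)), ?_⟩
            show _ = a (n + 1) * ρ m
            rw [htail]; omega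
        · simp only [Set.mem_setOf_eq] at hx
          exact ⟨j + (x - a (n + 1) * b (n + 1)), by rw [htail]; omega⟩
    · intro i
      rw [show i + 2 = (i + 1) + 1 by omega, hgap (i + 1), hgap i]
      by_cases h1 : i + 1 < j
      · rw [if_pos h1, if_pos (by omega)]
        exact Nat.mul_dvd_mul_left (a (n + 1)) (hdvd i)
      · rw [if_neg h1]
        exact one_dvd _
    · intro x hx
      rw [if_neg (Nat.succ_ne_zero n)] at hx
      exact ⟨j + (x - a (n + 1) * b (n + 1)), by rw [htail]; omega⟩

/-- Backward core. -/
lemma lemB : ∀ (j : ℕ) (ρ : ℕ → ℕ), StrictMono ρ → ρ 0 = 0 →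
    (∀ i, (ρ (i + 2) - ρ (i + 1)) ∣ (ρ (i + 1) - ρ i)) →
    (∀ i, j ≤ i → ρ (i + 1) = ρ i + 1) →
    ∃ n, ∃ a b : ℕ → ℕ, (∀ i, 1 ≤ i → i ≤ n → 2 ≤ a i) ∧ (1 ≤ n → 1 ≤ b 1) ∧
      (∀ i, 1 ≤ i → i + 1 ≤ n → a i * b i ≤ b (i + 1)) ∧ Set.range ρ = IndSG a b n ∧
      (1 ≤ n → a n * b n ≤ ρ j) := by
  intro j
  induction j with
  | zero =>
    intro ρ hmono h0 hdvd h1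
    have hid : ∀ i, ρ i = i := by
      intro i
      induction i with
      | zero => exact h0
      | succ i ihi => rw [h1 i (Nat.zero_le i), ihi]
    refine ⟨0, fun _ => 2, fun _ => 1, by omega, by omega, by omega, ?_, by omega⟩
    show Set.range ρ = Set.univ
    ext x
    simp only [Set.mem_univ, iff_true]
    exact ⟨x, hid x⟩
  | succ j ihj =>
    intro ρ hmono h0 hdvd h1
    by_cases hδj : ρ (j + 1) = ρ j + 1
    · obtain ⟨n, a, b, c1, c2, c3, c4, c5⟩ := ihj ρ hmono h0 hdvd (fun i hi => by
        rcases eq_or_lt_of_le hi with rfl | hlt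
        · exact hδj
        · exact h1 i (by omega))
      exact ⟨n, a, b, c1, c2, c3, c4,
        fun h => le_trans (c5 h) (hmono (by omega : j < j + 1)).le⟩
    · set g := ρ (j + 1) - ρ j with hgdef
      have hmj : ρ j < ρ (j + 1) := hmono (by omega)
      have hg2 : 2 ≤ g := by omega
      have hchain : ∀ i, i ≤ j → g ∣ (ρ (i + 1) - ρ i) := by
        intro i hi
        have := dvd_chain hdvd i (j - i)
        rwa [show i + (j - i) = j by omega] at this
      have hdvdρ : ∀ i, i ≤ j + 1 → g ∣ ρ i := by
        intro i hi
        induction i with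
        | zero => simp [h0]
        | succ i ihi =>
          have h2 : ρ i ≤ ρ (i + 1) := (hmono (by omega)).le
          have h3 : ρ (i + 1) = ρ i + (ρ (i + 1) - ρ i) := by omega
          rw [h3]
          exact Nat.dvd_add (ihi (by omega)) (hchain i (by omega))
      set c := ρ (j + 1) with hcdef
      have hgc : g ∣ c := hdvdρ (j + 1) le_rfl
      set ρ' : ℕ → ℕ := fun i => if i ≤ j + 1 then ρ i / g else c / g + (i - (j + 1)) with hρ'def
      have hdiveq : ∀ u i, ρ i = g * u → ρ i / g = u := by
        intro u i hu
        rw [hu, Nat.mul_div_cancel_left u (by omega)]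
      have htail' : ∀ k, ρ' (j + 1 + k) = c / g + k := by
        intro k
        cases k with
        | zero => simp [hρ'def, hcdef]
        | succ k => simp only [hρ'def]; rw [if_neg (by omega)]; omega
      have hmono' : StrictMono ρ' := by
        intro i i' hii
        by_cases hi' : i' ≤ j + 1
        · have hi : i ≤ j + 1 := by omega
          obtain ⟨u, hu⟩ := hdvdρ i hi
          obtain ⟨v, hv⟩ := hdvdρ i' hi'
          simp only [hρ'def, if_pos hi, if_pos hi', hdiveq u i hu, hdiveq v i' hv]
          have : g * u < g * v := by rw [← hu, ← hv]; exact hmono hii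
          exact Nat.lt_of_mul_lt_mul_left this
        · by_cases hi : i ≤ j + 1
          · simp only [hρ'def, if_pos hi, if_neg hi']
            have h2 : ρ i ≤ c := hmono.monotone hi
            have h3 : ρ i / g ≤ c / g := Nat.div_le_div_right h2
            omega
          · simp only [hρ'def, if_neg hi, if_neg hi']
            omega
      have h0' : ρ' 0 = 0 := by simp [hρ'def, h0]
      have hgap' : ∀ i, ρ' (i + 1) - ρ' i = if i ≤ j then (ρ (i + 1) - ρ i) / g else 1 := by
        intro i
        by_cases hi : i ≤ j
        · rw [if_pos hi]
          obtain ⟨u, hu⟩ := hdvdρ i (by omega)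
          obtain ⟨w, hw⟩ := hdvdρ (i + 1) (by omega)
          simp only [hρ'def, if_pos (show i ≤ j + 1 by omega),
            if_pos (show i + 1 ≤ j + 1 by omega), hdiveq u i hu, hdiveq w (i + 1) hw]
          rw [hu, hw, ← Nat.mul_sub, Nat.mul_div_cancel_left _ (show 0 < g by omega)]
        · rw [if_neg hi]
          obtain ⟨k, rfl⟩ := Nat.le.dest (show j + 1 ≤ i by omega)
          have h2 := htail' k
          have h3 := htail' (k + 1)
          rw [show j + 1 + k + 1 = j + 1 + (k + 1) by omega] at *
          omega
      have hδ'g : (ρ (j + 1) - ρ j) / g = 1 := by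
        rw [← hgdef, Nat.div_self (by omega)]
      have h1' : ∀ i, j ≤ i → ρ' (i + 1) = ρ' i + 1 := by
        intro i hi
        have h2 := hgap' i
        have h3 : ρ' i < ρ' (i + 1) := hmono' (by omega)
        rcases eq_or_lt_of_le hi with rfl | hlt
        · rw [if_pos le_rfl, hδ'g] at h2; omega
        · rw [if_neg (by omega)] at h2; omega
      have hdvd' : ∀ i, (ρ' (i + 2) - ρ' (i + 1)) ∣ (ρ' (i + 1) - ρ' i) := by
        intro i
        rw [show i + 2 = (i + 1) + 1 by omega, hgap' (i + 1), hgap' i]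
        by_cases h2 : i + 1 ≤ j
        · rw [if_pos h2, if_pos (by omega)]
          obtain ⟨p, hp⟩ := hchain (i + 1) h2
          obtain ⟨q, hq⟩ := hdvd i
          rw [hp, hq, hp, Nat.mul_div_cancel_left _ (show 0 < g by omega), Nat.mul_assoc,
            Nat.mul_div_cancel_left _ (show 0 < g by omega)]
          exact Dvd.intro q rfl
        · rw [if_neg h2]
          exact one_dvd _
      obtain ⟨n, A, B, hA, hB1, hBc, hrange', hlast⟩ := ihj ρ' hmono' h0' hdvd' h1'
      set a' : ℕ → ℕ := fun i => if i = n + 1 then g else A i with ha'def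
      set b' : ℕ → ℕ := fun i => if i = n + 1 then c / g else B i with hb'def
      have hρ'j1 : ρ' (j + 1) = c / g := by simp [hρ'def, hcdef]
      have hIeq : IndSG a' b' n = IndSG A B n := by
        refine IndSG_congr _ _ _ _ n (fun i hi1 hi2 => ?_) (fun i hi1 hi2 => ?_) <;>
          simp [ha'def, hb'def, show i ≠ n + 1 by omega]
      have hρtail : ∀ k, ρ (j + 1 + k) = c + k := by
        intro k
        induction k with
        | zero => simp [hcdef]
        | succ k ihk =>
          rw [show j + 1 + (k + 1) = (j + 1 + k) + 1 by omega, h1 (j + 1 + k) (by omega), ihk]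
          omega
      have hcall : ∀ x, c ≤ x → x ∈ Set.range ρ := by
        intro x hx
        exact ⟨j + 1 + (x - c), by rw [hρtail]; omega⟩
      refine ⟨n + 1, a', b', ?_, ?_, ?_, ?_, ?_⟩
      · intro i hi1 hi2
        by_cases hi : i = n + 1
        · simp [ha'def, hi]; omega
        · simp only [ha'def, if_neg hi]
          exact hA i hi1 (by omega)
      · intro _
        by_cases hn : n = 0
        · subst hn
          simp only [hb'def, if_pos rfl]
          have : g ≤ c := by
            have : ρ j ≥ 0 := Nat.zero_le _
            omega
          exact Nat.one_le_div_iff (by omega) |>.mpr this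
        · simp only [hb'def, if_neg (show 1 ≠ n + 1 by omega)]
          exact hB1 (by omega)
      · intro i hi1 hi2
        by_cases hi : i + 1 = n + 1
        · have hin : i = n := by omega
          subst hin
          simp only [ha'def, hb'def, if_neg (show i ≠ i + 1 by omega), if_pos rfl]
          calc A i * B i ≤ ρ' j := hlast (by omega)
            _ ≤ ρ' (j + 1) := (hmono'.monotone (by omega))
            _ = c / g := hρ'j1
        · simp only [ha'def, hb'def, if_neg (show i ≠ n + 1 by omega),
            if_neg (show i + 1 ≠ n + 1 by omega)]
          exact hBc i hi1 (by omega)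
      · show Set.range ρ = _ ∪ _
        have ha'n : a' (n + 1) = g := by simp [ha'def]
        have hb'n : b' (n + 1) = c / g := by simp [hb'def]
        have hgcg : g * (c / g) = c := Nat.mul_div_cancel' hgc
        rw [ha'n, hb'n, hIeq, ← hrange', hgcg]
        ext x
        constructor
        · rintro ⟨m, rfl⟩
          by_cases hm : m ≤ j + 1
          · left
            refine ⟨ρ' m, ⟨m, rfl⟩, ?_⟩
            simp only [hρ'def, if_pos hm]
            exact Nat.mul_div_cancel' (hdvdρ m hm)
          · right
            show c ≤ ρ m
            exact hmono.monotone (by omega : j + 1 ≤ m)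
        · rintro (⟨y, ⟨m, rfl⟩, rfl⟩ | hx)
          · by_cases hm : m ≤ j + 1
            · refine ⟨m, ?_⟩
              simp only [hρ'def, if_pos hm]
              exact (Nat.mul_div_cancel' (hdvdρ m hm)).symm
            · apply hcall
              have h2 : c / g ≤ ρ' m := by
                simp only [hρ'def, if_neg hm]; omega
              calc c = g * (c / g) := hgcg.symm
                _ ≤ g * ρ' m := Nat.mul_le_mul_left g h2
          · exact hcall x hx
      · intro _
        simp only [ha'def, hb'def, if_pos rfl]
        rw [Nat.mul_div_cancel' hgc]

/-- Here `ρ` enumerates Γ in increasing order, starting with `ρ 0 = ρ₁ = 0`;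
`δᵢ = ρ_{i+1} - ρᵢ` for `i ≥ 1` becomes `ρ (i+1) - ρ i` for `i ≥ 0`. -/
theorem stmt1 (Γ : Set ℕ) (hΓ : IsNumericalSemigroup Γ)
    (ρ : ℕ → ℕ) (hρmono : StrictMono ρ) (hρrange : Set.range ρ = Γ) :
    IsInductive Γ ↔ ∀ i, (ρ (i + 2) - ρ (i + 1)) ∣ (ρ (i + 1) - ρ i) := by
  constructor
  · rintro ⟨n, a, b, ha, hb1, hbc, hΓeq⟩
    obtain ⟨ρ', h1, h2, h3, _⟩ := lemA n a b ha hb1 hbc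
    have heq : ∀ m, ρ m = ρ' m :=
      strictMono_range_eq hρmono h1 (by rw [hρrange, h2, hΓeq])
    intro i
    rw [heq, heq, heq]
    exact h3 i
  · intro hdvd
    have h0 : ρ 0 = 0 := by
      obtain ⟨m, hm⟩ : 0 ∈ Set.range ρ := hρrange ▸ hΓ.1
      have := hρmono.monotone (Nat.zero_le m)
      omega
    obtain ⟨N, hN⟩ := hΓ.2.2.bddAbove
    have hNall : ∀ x, N + 1 ≤ x → x ∈ Γ := by
      intro x hx
      by_contra hc
      have := hN hc
      omega
    have h1 : ∀ i, N + 1 ≤ i → ρ (i + 1) = ρ i + 1 := by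
      intro i hi
      have hge : N + 1 ≤ ρ i := le_trans hi hρmono.le_apply
      have hmem : ρ i + 1 ∈ Γ := hNall _ (by omega)
      obtain ⟨m, hm⟩ : ρ i + 1 ∈ Set.range ρ := hρrange ▸ hmem
      have hm1 : i < m := by
        by_contra hc
        have := hρmono.monotone (show m ≤ i by omega)
        omega
      have h2 : ρ (i + 1) ≤ ρ m := hρmono.monotone (by omega)
      have h3 : ρ i < ρ (i + 1) := hρmono (by omega)
      omega
    obtain ⟨n, a, b, ha, hb1, hbc, hr, _⟩ := lemB (N + 1) ρ hρmono h0 hdvd h1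
    exact ⟨n, a, b, ha, hb1, hbc, hρrange ▸ hr⟩
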